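/- Truncation lemma: if X̂_n = Ô_P(Y_n; r_n) and lim_{n→∞} r_n^{-1} log P(|X_n| ≥ |X̂_n|) = -∞, then X_n = Ô_P(Y_n; r_n). -/
import Mathlib


open MeasureTheory

/-- `X_n = Ô_P(Y_n; r_n)`: there exist constants `C1, C2, N > 0`, a non-decreasing
`f : [C2, ∞) → (0, ∞)` with `f → ∞`, and a positive deterministic sequence `R_n → ∞`,
such that `P(|X_n| ≥ t |Y_n|) ≤ C1 exp(-r_n f(t))` for all `n ≥ N` and `C2 ≤ t ≤ R_n`. -/
def OhatP {Ω : Type*} [MeasurableSpace Ω] (μ : MeasureTheory.Measure Ω)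
    (X Y : ℕ → Ω → ℝ) (r : ℕ → ℝ) : Prop :=
  ∃ C1 C2 N : ℝ, 0 < C1 ∧ 0 < C2 ∧ 0 < N ∧
    ∃ f : ℝ → ℝ,
      (∀ s t : ℝ, C2 ≤ s → s ≤ t → f s ≤ f t) ∧
      (∀ t : ℝ, C2 ≤ t → 0 < f t) ∧
      Filter.Tendsto f Filter.atTop Filter.atTop ∧
      ∃ R : ℕ → ℝ, (∀ n, 0 < R n) ∧ Filter.Tendsto R Filter.atTop Filter.atTop ∧
        ∀ n : ℕ, N ≤ (n : ℝ) → ∀ t : ℝ, C2 ≤ t → t ≤ R n →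
          μ {ω | t * |Y n ω| ≤ |X n ω|} ≤ ENNReal.ofReal (C1 * Real.exp (-(r n) * f t))

/-- Truncation: if `X̂_n = Ô_P(Y_n; r_n)` and `r_n⁻¹ log P(|X_n| ≥ |X̂_n|) → -∞`
(the latter expressed, with the convention `log 0 = -∞`, as: for every `M`, eventually
`P(|X_n| ≥ |X̂_n|) ≤ exp(-M r_n)`), then `X_n = Ô_P(Y_n; r_n)`. -/
theorem stmt6 {Ω : Type*} [MeasurableSpace Ω] (μ : Measure Ω) [IsProbabilityMeasure μ]
    (X Xhat Y : ℕ → Ω → ℝ) (r : ℕ → ℝ) (hr : ∀ n, 0 < r n)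
    (hXhat : OhatP μ Xhat Y r)
    (htrunc : ∀ M : ℝ, ∃ N : ℕ, ∀ n : ℕ, N ≤ n →
      μ {ω | |Xhat n ω| ≤ |X n ω|} ≤ ENNReal.ofReal (Real.exp (-(M * r n)))) :
    OhatP μ X Y r := by
  obtain ⟨C1, C2, N, hC1, hC2, hN, f, hfmono, hfpos, hftop, R, hRpos, hRtop, hbound⟩ := hXhat
  choose φ hφ using fun k : ℕ => htrunc (f (C2 + k))
  set φ' : ℕ → ℕ := fun k => (Finset.range (k + 1)).sup φ + k with hφ'def
  have hφle : ∀ k, φ k ≤ φ' k := fun k =>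
    le_trans (Finset.le_sup (Finset.self_mem_range_succ k)) (Nat.le_add_right _ _)
  set K : ℕ → ℕ := fun n => Nat.findGreatest (fun k => φ' k ≤ n) n with hKdef
  have hKtop : Filter.Tendsto K Filter.atTop Filter.atTop := by
    refine Filter.tendsto_atTop.2 fun b => ?_
    filter_upwards [Filter.eventually_ge_atTop (max b (φ' b))] with n hn
    exact Nat.le_findGreatest (le_trans (le_max_left _ _) hn) (le_trans (le_max_right _ _) hn)
  have hStop : Filter.Tendsto (fun n => C2 + (K n : ℝ)) Filter.atTop Filter.atTop :=
    Filter.tendsto_atTop_add_const_left _ _ (tendsto_natCast_atTop_atTop.comp hKtop)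
  refine ⟨C1 + 1, C2, max N ((φ' 0 : ℝ) + 1), by linarith,
    hC2, lt_of_lt_of_le (by positivity) (le_max_right _ _), f, hfmono, hfpos, hftop,
    fun n => min (R n) (C2 + (K n : ℝ)), fun n => lt_min (hRpos n) (by positivity), ?_, ?_⟩
  · refine Filter.tendsto_atTop.2 fun b => ?_
    filter_upwards [Filter.tendsto_atTop.1 hRtop b, Filter.tendsto_atTop.1 hStop b] with n h1 h2
    exact le_min h1 h2
  · intro n hn t hC2t htle
    have hnN : N ≤ (n : ℝ) := le_trans (le_max_left _ _) hn
    have hn0 : φ' 0 ≤ n := by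
      have : ((φ' 0 : ℝ) + 1) ≤ (n : ℝ) := le_trans (le_max_right _ _) hn
      exact_mod_cast le_trans (by linarith : ((φ' 0 : ℝ)) ≤ (n : ℝ)) le_rfl
    have hKspec : φ' (K n) ≤ n :=
      Nat.findGreatest_spec (P := fun k => φ' k ≤ n) (Nat.zero_le n) hn0
    have h1 := hbound n hnN t hC2t (le_trans htle (min_le_left _ _))
    have h2 := hφ (K n) n (le_trans (hφle _) hKspec)
    have hft : f t ≤ f (C2 + (K n : ℝ)) :=
      hfmono t _ hC2t (le_trans htle (min_le_right _ _))
    have h2' : μ {ω | |Xhat n ω| ≤ |X n ω|} ≤ ENNReal.ofReal (Real.exp (-(r n) * f t)) := by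
      refine le_trans h2 (ENNReal.ofReal_le_ofReal (Real.exp_le_exp.2 ?_))
      have := hr n
      nlinarith
    calc μ {ω | t * |Y n ω| ≤ |X n ω|}
        ≤ μ ({ω | t * |Y n ω| ≤ |Xhat n ω|} ∪ {ω | |Xhat n ω| ≤ |X n ω|}) := by
          refine measure_mono fun ω hω => ?_
          by_cases h : t * |Y n ω| ≤ |Xhat n ω|
          · exact Or.inl h
          · exact Or.inr (le_trans (le_of_not_ge h) hω)
      _ ≤ μ {ω | t * |Y n ω| ≤ |Xhat n ω|} + μ {ω | |Xhat n ω| ≤ |X n ω|} :=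
          measure_union_le _ _
      _ ≤ ENNReal.ofReal (C1 * Real.exp (-(r n) * f t)) +
            ENNReal.ofReal (Real.exp (-(r n) * f t)) := add_le_add h1 h2'
      _ = ENNReal.ofReal ((C1 + 1) * Real.exp (-(r n) * f t)) := by
          rw [← ENNReal.ofReal_add (by positivity) (by positivity)]
          ring_nf
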